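/- arXiv:2502.05397 — 2 statements merged into one kernel-verified Lean document; each statement's English description precedes it below -/
import Mathlib

section
/- Let C be the ORCA coverage recursion on a finite grid {1,…,T} × {1,…,J} with P ∈ [0,1]. Then C(T,J) ≤ ∏_{k=1}^{J} (max_{i ≤ T} P(i,k)); the final ordered coverage is bounded above by the product over subgoals of the best single-timestep occupancy probabilities. -/
/-- ORCA ordered-coverage dynamic program. `cov P t j` is `C(t,j)` with the
conventions `C(0,j) = 0` (no time elapsed), `C(t,0) = 1` for `t ≥ 1`
(empty prefix of subgoals), and for `t, j ≥ 1`
`C(t,j) = max (C(t-1,j)) (C(t,j-1) * P t j)`, which for nonnegative `P`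
yields the base cases `C(1,1) = P 1 1`, `C(1,j) = C(1,j-1) * P 1 j`, and
`C(t,1) = max (C(t-1,1)) (P t 1)`. -/
def cov (P : ℕ → ℕ → ℝ) : ℕ → ℕ → ℝ
  | 0, _ => 0
  | _ + 1, 0 => 1
  | t + 1, j + 1 => max (cov P t (j + 1)) (cov P (t + 1) j * P (t + 1) (j + 1))

theorem stmt13 (P : ℕ → ℕ → ℝ) (hP : ∀ t j, 0 ≤ P t j ∧ P t j ≤ 1) (T J : ℕ)
    (hT : 1 ≤ T) (hJ : 1 ≤ J) :
    cov P T J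
      ≤ ∏ k ∈ Finset.Icc 1 J,
          (Finset.Icc 1 T).sup' (Finset.nonempty_Icc.mpr hT) (fun i => P i k) := by
  set M : ℕ → ℝ := fun k => (Finset.Icc 1 T).sup' (Finset.nonempty_Icc.mpr hT) (fun i => P i k)
    with hMdef
  have hM0 : ∀ k, 0 ≤ M k := fun k =>
    le_trans (hP 1 k).1 (Finset.le_sup' (fun i => P i k) (by simp [hT]))
  have hprod : ∀ j, 0 ≤ ∏ k ∈ Finset.Icc 1 j, M k :=
    fun j => Finset.prod_nonneg (fun k _ => hM0 k)
  have main : ∀ t, t ≤ T → ∀ j, cov P t j ≤ ∏ k ∈ Finset.Icc 1 j, M k := by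
    intro t
    induction t with
    | zero => intro _ j; simpa [cov] using hprod j
    | succ t ih =>
      intro ht j
      induction j with
      | zero => simp [cov]
      | succ j ihj =>
        rw [cov, Finset.prod_Icc_succ_top (Nat.le_add_left 1 j) M]
        apply max_le
        · exact le_trans (ih (le_trans (Nat.le_succ t) ht) (j+1))
            (le_of_eq (Finset.prod_Icc_succ_top (Nat.le_add_left 1 j) M))
        · apply mul_le_mul ihj _ (hP (t+1) (j+1)).1 (hprod j)
          exact Finset.le_sup' (fun i => P i (j+1)) (Finset.mem_Icc.mpr ⟨Nat.le_add_left 1 t, ht⟩)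
  exact main T le_rfl J
end

section
/- Let C be the ORCA coverage recursion with P ∈ [0,1] and suppose T ≥ J. If for each k ∈ {1,…,J} there exists a time i_k with i_1 ≤ i_2 ≤ … ≤ i_J ≤ T and P(i_k, k) = 1, then C(T,J) = 1. -/
lemma cov_nonneg (P : ℕ → ℕ → ℝ) (hP : ∀ t j, 0 ≤ P t j ∧ P t j ≤ 1) :
    ∀ t j, 0 ≤ cov P t j
  | 0, _ => by simp [cov]
  | _ + 1, 0 => by simp [cov]
  | t + 1, j + 1 => by
    rw [cov]
    exact le_trans (mul_nonneg (cov_nonneg P hP (t + 1) j) (hP (t + 1) (j + 1)).1)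
      (le_max_right _ _)

lemma cov_le_one (P : ℕ → ℕ → ℝ) (hP : ∀ t j, 0 ≤ P t j ∧ P t j ≤ 1) :
    ∀ t j, cov P t j ≤ 1
  | 0, _ => by simp [cov]
  | _ + 1, 0 => by simp [cov]
  | t + 1, j + 1 => by
    rw [cov]
    refine max_le (cov_le_one P hP t (j + 1)) ?_
    calc cov P (t + 1) j * P (t + 1) (j + 1) ≤ 1 * 1 :=
          mul_le_mul (cov_le_one P hP (t + 1) j) (hP (t + 1) (j + 1)).2
            (hP (t + 1) (j + 1)).1 zero_le_one
      _ = 1 := one_mul 1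

lemma cov_mono_t (P : ℕ → ℕ → ℝ) (hP : ∀ t j, 0 ≤ P t j ∧ P t j ≤ 1)
    {t t' : ℕ} (h : t ≤ t') (j : ℕ) : cov P t j ≤ cov P t' j := by
  induction t' with
  | zero => simp_all
  | succ n ih =>
    rcases Nat.lt_or_ge t (n + 1) with h' | h'
    · refine le_trans (ih (Nat.lt_succ_iff.mp h')) ?_
      cases j with
      | zero =>
        cases n with
        | zero => simp [cov]
        | succ m => simp [cov]
      | succ j =>
        rw [show cov P (n + 1) (j + 1) =
          max (cov P n (j + 1)) (cov P (n + 1) j * P (n + 1) (j + 1)) from by rw [cov]]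
        exact le_max_left _ _
    · have : t = n + 1 := le_antisymm h h'
      simp [this]

theorem stmt14 (P : ℕ → ℕ → ℝ) (hP : ∀ t j, 0 ≤ P t j ∧ P t j ≤ 1) (T J : ℕ)
    (hJ : 1 ≤ J) (hTJ : J ≤ T)
    (hex : ∃ i : ℕ → ℕ,
      (∀ k l, 1 ≤ k → k ≤ l → l ≤ J → i k ≤ i l) ∧
      1 ≤ i 1 ∧ i J ≤ T ∧
      ∀ k, 1 ≤ k → k ≤ J → P (i k) k = 1) :
    cov P T J = 1 := by
  obtain ⟨i, hmono, hi1, hiJ, hPi⟩ := hex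
  have key : ∀ k, 1 ≤ k → k ≤ J → cov P (i k) k = 1 := by
    intro k
    induction k with
    | zero => omega
    | succ k ih =>
      intro _ hkJ
      have hik1 : 1 ≤ i (k + 1) := le_trans hi1 (hmono 1 (k + 1) le_rfl (by omega) hkJ)
      obtain ⟨m, hm⟩ : ∃ m, i (k + 1) = m + 1 := ⟨i (k + 1) - 1, by omega⟩
      have hprev : cov P (m + 1) k = 1 := by
        cases k with
        | zero => simp [cov]
        | succ k' =>
          have h1 := ih (by omega) (by omega)
          have h2 : i (k' + 1) ≤ m + 1 := by
            rw [← hm]; exact hmono (k' + 1) (k' + 2) (by omega) (by omega) hkJ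
          refine le_antisymm (cov_le_one P hP _ _) ?_
          rw [← h1]
          exact cov_mono_t P hP h2 _
      have hPk : P (m + 1) (k + 1) = 1 := by
        rw [← hm]; exact hPi (k + 1) (by omega) hkJ
      refine le_antisymm (cov_le_one P hP _ _) ?_
      rw [hm, cov]
      calc (1 : ℝ) = cov P (m + 1) k * P (m + 1) (k + 1) := by rw [hprev, hPk, one_mul]
        _ ≤ _ := le_max_right _ _
  refine le_antisymm (cov_le_one P hP _ _) ?_
  rw [← key J hJ le_rfl]
  exact cov_mono_t P hP hiJ J
end
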